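/- Fix γ > 0 and F ≥ 1 (F playing the role of the Fisher information F_g). For α ∈ ℝ with α² + 2α + F > 0, define λ_{h_α} = (2γ(1+α)(F+α) + γ²(α+F)²)/(α² + 2α + F), and set α_g = (−γF + √(4F + 4γF + γ²F²))/(2(1+γ)) and λ_g = γ + γ²F/2 + (γ/2)·√(4F + 4γF + γ²F²). Then: (i) λ_{h_{α_g}} = λ_g; (ii) λ_{h_α} ≤ λ_g for every admissible α; (iii) λ_{h_{√F}} = γ(1+√F) + (γ²/2)(F + √F) ≥ 2γ + γ²; and (iv) λ_g ≥ 2γ + γ²F ≥ 2γ + γ² = λ, where the inequality λ_g > λ is strict whenever F > 1. -/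
import Mathlib


set_option autoImplicit false
set_option maxHeartbeats 800000

noncomputable section

/-- The effective SNR `λ_{h_α}` produced by the entrywise transformation
`h_α = -g'/g + α·id` in the multiplicative spiked model with parameter `γ`,
where `F` is the Fisher information of the noise density. -/
def effSNR (γ F α : ℝ) : ℝ :=
  (2 * γ * (1 + α) * (F + α) + γ ^ 2 * (α + F) ^ 2) / (α ^ 2 + 2 * α + F)

/-- The optimal transformation parameter `α_g`. -/
def alphaOpt (γ F : ℝ) : ℝ :=
  (-(γ * F) + Real.sqrt (4 * F + 4 * γ * F + γ ^ 2 * F ^ 2)) / (2 * (1 + γ))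

/-- The optimal effective SNR `λ_g`. -/
def lambdaOpt (γ F : ℝ) : ℝ :=
  γ + γ ^ 2 * F / 2 + γ / 2 * Real.sqrt (4 * F + 4 * γ * F + γ ^ 2 * F ^ 2)

/-- **Algebraic optimization of the entrywise transformation for the multiplicative
model (Appendix B.5.2).** (i) `λ_{h_{α_g}} = λ_g`; (ii) `λ_{h_α} ≤ λ_g` for every
admissible `α`; (iii) `λ_{h_{√F}} = γ(1+√F) + (γ²/2)(F+√F) ≥ 2γ + γ²`;
(iv) `λ_g ≥ 2γ + γ²F ≥ 2γ + γ² = λ`, strictly if `F > 1`. -/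
theorem effective_snr_optimization
    (γ F : ℝ) (hγ : 0 < γ) (hF : 1 ≤ F) :
    effSNR γ F (alphaOpt γ F) = lambdaOpt γ F
    ∧ (∀ α : ℝ, 0 < α ^ 2 + 2 * α + F → effSNR γ F α ≤ lambdaOpt γ F)
    ∧ (effSNR γ F (Real.sqrt F)
        = γ * (1 + Real.sqrt F) + γ ^ 2 / 2 * (F + Real.sqrt F)
      ∧ 2 * γ + γ ^ 2 ≤ γ * (1 + Real.sqrt F) + γ ^ 2 / 2 * (F + Real.sqrt F))
    ∧ (2 * γ + γ ^ 2 * F ≤ lambdaOpt γ F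
      ∧ 2 * γ + γ ^ 2 ≤ 2 * γ + γ ^ 2 * F
      ∧ (1 < F → 2 * γ + γ ^ 2 < lambdaOpt γ F)) := by
  have hγ1 : (0:ℝ) < 1 + γ := by linarith
  have hE : (0:ℝ) ≤ 4 * F + 4 * γ * F + γ ^ 2 * F ^ 2 := by nlinarith
  set s := Real.sqrt (4 * F + 4 * γ * F + γ ^ 2 * F ^ 2) with hsdef
  have hs2 : s ^ 2 = 4 * F + 4 * γ * F + γ ^ 2 * F ^ 2 := Real.sq_sqrt hE
  have hs0 : 0 ≤ s := Real.sqrt_nonneg _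
  have hkey : ∀ t : ℝ, t ^ 2 ≤ 4 * F + 4 * γ * F + γ ^ 2 * F ^ 2 → t ≤ s := by
    intro t ht
    rcases le_or_gt t 0 with h | h
    · linarith
    · nlinarith [hs2, hs0]
  -- the optimal point
  set a := alphaOpt γ F with hadef
  have ha : 2 * (1 + γ) * a = s - γ * F := by
    rw [hadef, alphaOpt, ← hsdef]
    field_simp
    ring
  have hl : lambdaOpt γ F = γ + γ ^ 2 * F + γ * (1 + γ) * a := by
    rw [lambdaOpt, ← hsdef]
    linear_combination (-(γ / 2)) * ha
  have hquad : (1 + γ) * a ^ 2 + γ * F * a - F = 0 := by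
    have h4 : (4 * (1 + γ)) * ((1 + γ) * a ^ 2 + γ * F * a - F) = 0 := by
      linear_combination (2 * (1 + γ) * a + s + γ * F) * ha + hs2
    have h40 : (4 * (1 + γ)) ≠ 0 := by positivity
    exact (mul_eq_zero.mp h4).resolve_left h40
  -- the master identity
  have hQ : ∀ α : ℝ,
      lambdaOpt γ F * (α ^ 2 + 2 * α + F)
        - (2 * γ * (1 + α) * (F + α) + γ ^ 2 * (α + F) ^ 2)
        = γ * (γ * F + (1 + γ) * a - 1 - γ) * (α - a) ^ 2 := by
    intro α
    linear_combination (α ^ 2 + 2 * α + F) * hl + (2 * γ * α + γ * (1 - a)) * hquad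
  -- nonnegativity of the leading coefficient
  have hslow2 : 2 + 2 * γ - γ * F ≤ s := by
    apply hkey
    nlinarith [sq_nonneg (1 + γ), hF]
  have hA : 0 ≤ γ * (γ * F + (1 + γ) * a - 1 - γ) := by
    apply mul_nonneg hγ.le
    nlinarith [ha, hslow2]
  -- positivity of the denominator at the optimum
  have hd4 : 4 * (1 + γ) ^ 2 * (a ^ 2 + 2 * a + F)
      = 2 * γ ^ 2 * F ^ 2 + (4 + 4 * γ - 2 * γ * F) * s + 8 * F + 8 * γ * F := by
    linear_combination (2 * (1 + γ) * a + s - γ * F + 4 * (1 + γ)) * ha + hs2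
  have hd0 : 0 < 4 * (1 + γ) ^ 2 * (a ^ 2 + 2 * a + F) := by
    rw [hd4]
    nlinarith [hs0, hs2, sq_nonneg (s - γ * F), hγ, hF]
  have hp : (0:ℝ) < 4 * (1 + γ) ^ 2 := by positivity
  have hda : 0 < a ^ 2 + 2 * a + F := by nlinarith [hd0, hp]
  refine ⟨?_, ?_, ⟨?_, ?_⟩, ?_, ?_, ?_⟩
  · -- (i)
    rw [effSNR, div_eq_iff (ne_of_gt hda)]
    linear_combination -(hQ a)
  · -- (ii)
    intro α hd
    rw [effSNR, div_le_iff₀ hd]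
    nlinarith [hQ α, mul_nonneg hA (sq_nonneg (α - a))]
  · -- (iii) equality
    have ht2 : Real.sqrt F ^ 2 = F := Real.sq_sqrt (by linarith)
    have ht0 : 0 ≤ Real.sqrt F := Real.sqrt_nonneg F
    have hne : Real.sqrt F ^ 2 + 2 * Real.sqrt F + F ≠ 0 := by
      have : 0 < Real.sqrt F ^ 2 + 2 * Real.sqrt F + F := by
        have := sq_nonneg (Real.sqrt F); linarith
      exact ne_of_gt this
    rw [effSNR, div_eq_iff hne]
    linear_combination (-(γ * (1 + Real.sqrt F) + γ ^ 2 / 2 * (F + Real.sqrt F))) * ht2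
  · -- (iii) inequality
    have ht2 : Real.sqrt F ^ 2 = F := Real.sq_sqrt (by linarith)
    have ht0 : 0 ≤ Real.sqrt F := Real.sqrt_nonneg F
    have ht1 : 1 ≤ Real.sqrt F := by nlinarith [ht2, ht0]
    nlinarith [mul_nonneg hγ.le (sub_nonneg.mpr ht1),
      mul_nonneg (sq_nonneg γ) (sub_nonneg.mpr ht1),
      mul_nonneg (sq_nonneg γ) (sub_nonneg.mpr hF)]
  · -- (iv) first
    have hslow : 2 + γ * F ≤ s := by
      apply hkey
      nlinarith [hF]
    rw [lambdaOpt, ← hsdef]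
    nlinarith [mul_nonneg hγ.le (sub_nonneg.mpr hslow)]
  · -- (iv) second
    nlinarith [mul_nonneg (sq_nonneg γ) (sub_nonneg.mpr hF)]
  · -- (iv) strict
    intro hF1
    have hslow : 2 + γ * F ≤ s := by
      apply hkey
      nlinarith [hF]
    rw [lambdaOpt, ← hsdef]
    nlinarith [mul_nonneg hγ.le (sub_nonneg.mpr hslow),
      mul_pos (mul_pos hγ hγ) (sub_pos.mpr hF1)]

end
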